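/- The Anderson-Darling statistic, expressed via the integral form A² = n ∫_ℝ (F_n(x) - Φ(x))² / (Φ(x)(1 - Φ(x))) φ(x) dx, equals the computable form -n - (1/n)Σ_{i=1}^n (2i-1)[log u_{(i)} + log(1 - u_{(n+1-i)})], where u_{(i)} = Φ(X_{(i)}). -/

import Mathlib

/-- The standard normal density. -/
noncomputable def stdNormalPDF (t : ℝ) : ℝ := Real.exp (-t ^ 2 / 2) / Real.sqrt (2 * Real.pi)

/-- The standard normal cumulative distribution function. -/
noncomputable def stdNormalCDF (x : ℝ) : ℝ := ∫ t in Set.Iic x, stdNormalPDF t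

/-- The empirical CDF of a sample. -/
noncomputable def empiricalCDF (n : ℕ) (X : Fin n → ℝ) (x : ℝ) : ℝ :=
  ((Finset.univ.filter fun i => X i ≤ x).card : ℝ) / (n : ℝ)

open MeasureTheory Set Filter Real


lemma AD.pdf_pos (t : ℝ) : 0 < stdNormalPDF t := by
  unfold stdNormalPDF
  have := Real.pi_pos
  positivity

lemma AD.pdf_cont : Continuous stdNormalPDF := by
  unfold stdNormalPDF
  fun_prop

lemma AD.pdf_eq (t : ℝ) : stdNormalPDF t = Real.exp (-(1/2) * t^2) * (Real.sqrt (2*Real.pi))⁻¹ := by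
  unfold stdNormalPDF
  rw [div_eq_mul_inv]
  ring_nf

lemma AD.pdf_integrable : Integrable stdNormalPDF := by
  have h := (integrable_exp_neg_mul_sq (b := (1/2:ℝ)) (by norm_num)).mul_const
    (Real.sqrt (2*Real.pi))⁻¹
  exact h.congr (Filter.Eventually.of_forall fun t => (AD.pdf_eq t).symm)

lemma AD.pdf_integral : ∫ t, stdNormalPDF t = 1 := by
  have h := integral_gaussian (1/2 : ℝ)
  have h2 : (Real.pi / (1/2)) = 2 * Real.pi := by ring
  simp_rw [AD.pdf_eq]
  rw [integral_mul_const, h, h2, mul_inv_cancel₀]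
  exact (Real.sqrt_pos.2 (by positivity)).ne'

lemma AD.cdf_eq (x : ℝ) : stdNormalCDF x = stdNormalCDF 0 + ∫ t in (0:ℝ)..x, stdNormalPDF t := by
  rw [← intervalIntegral.integral_Iic_sub_Iic AD.pdf_integrable.integrableOn
    AD.pdf_integrable.integrableOn]
  unfold stdNormalCDF; ring

lemma AD.cdf_hasDeriv (x : ℝ) : HasDerivAt stdNormalCDF (stdNormalPDF x) x := by
  have h : HasDerivAt (fun y => stdNormalCDF 0 + ∫ t in (0:ℝ)..y, stdNormalPDF t)
      (stdNormalPDF x) x := by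
    refine HasDerivAt.const_add _ ?_
    exact intervalIntegral.integral_hasDerivAt_right
      AD.pdf_integrable.intervalIntegrable
      (AD.pdf_cont.stronglyMeasurableAtFilter _ _)
      AD.pdf_cont.continuousAt
  exact h.congr_of_eventuallyEq (Filter.Eventually.of_forall fun y => AD.cdf_eq y)

lemma AD.cdf_diff : Differentiable ℝ stdNormalCDF :=
  fun x => (AD.cdf_hasDeriv x).differentiableAt

lemma AD.cdf_cont : Continuous stdNormalCDF := AD.cdf_diff.continuous

lemma AD.cdf_mono : StrictMono stdNormalCDF := by
  apply strictMono_of_deriv_pos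
  intro x
  rw [(AD.cdf_hasDeriv x).deriv]
  exact AD.pdf_pos x

lemma AD.cdf_tendsto_atTop : Tendsto stdNormalCDF atTop (nhds 1) := by
  have h : Tendsto (fun y : ℝ => ∫ t in Iic y, stdNormalPDF t) atTop
      (nhds (∫ t, stdNormalPDF t)) :=
    (aecover_Iic tendsto_id).integral_tendsto_of_countably_generated AD.pdf_integrable
  rwa [AD.pdf_integral] at h

lemma AD.cdf_tendsto_atBot : Tendsto stdNormalCDF atBot (nhds 0) := by
  have h : Tendsto (fun y : ℝ => ∫ t in Ioi y, stdNormalPDF t) atBot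
      (nhds (∫ t, stdNormalPDF t)) :=
    (aecover_Ioi tendsto_id).integral_tendsto_of_countably_generated AD.pdf_integrable
  have h2 : ∀ y : ℝ, stdNormalCDF y = 1 - ∫ t in Ioi y, stdNormalPDF t := by
    intro y
    have := intervalIntegral.integral_Iic_add_Ioi (b := y) AD.pdf_integrable.integrableOn
      AD.pdf_integrable.integrableOn
    rw [AD.pdf_integral] at this
    unfold stdNormalCDF; linarith
  rw [AD.pdf_integral] at h
  have h3 := (tendsto_const_nhds (x := (1:ℝ)) (f := (atBot : Filter ℝ))).sub h
  rw [sub_self] at h3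
  exact h3.congr fun y => (h2 y).symm

lemma AD.cdf_pos (x : ℝ) : 0 < stdNormalCDF x := by
  have h1 : (0:ℝ) ≤ stdNormalCDF (x - 1) := by
    refine le_of_tendsto AD.cdf_tendsto_atBot ?_
    filter_upwards [eventually_le_atBot (x - 1)] with y hy
    exact (AD.cdf_mono.le_iff_le).2 hy
  linarith [AD.cdf_mono (show x - 1 < x by linarith)]

lemma AD.cdf_lt_one (x : ℝ) : stdNormalCDF x < 1 := by
  have h1 : stdNormalCDF (x + 1) ≤ 1 := by
    refine ge_of_tendsto AD.cdf_tendsto_atTop ?_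
    filter_upwards [eventually_ge_atTop (x + 1)] with y hy
    exact (AD.cdf_mono.le_iff_le).2 hy
  linarith [AD.cdf_mono (show x < x + 1 by linarith)]

noncomputable def AD.g (c x : ℝ) : ℝ :=
  (c - stdNormalCDF x) ^ 2 / (stdNormalCDF x * (1 - stdNormalCDF x)) * stdNormalPDF x

noncomputable def AD.H (c x : ℝ) : ℝ :=
  c ^ 2 * Real.log (stdNormalCDF x) - (1 - c) ^ 2 * Real.log (1 - stdNormalCDF x) - stdNormalCDF x

lemma AD.cdf_ne (x : ℝ) : stdNormalCDF x ≠ 0 := (AD.cdf_pos x).ne'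

lemma AD.cdf_ne' (x : ℝ) : 1 - stdNormalCDF x ≠ 0 := sub_ne_zero.2 (AD.cdf_lt_one x).ne'

lemma AD.g_cont (c : ℝ) : Continuous (AD.g c) := by
  unfold AD.g
  apply Continuous.mul _ AD.pdf_cont
  apply Continuous.div ((continuous_const.sub AD.cdf_cont).pow 2)
    (AD.cdf_cont.mul (continuous_const.sub AD.cdf_cont))
  intro x
  exact mul_ne_zero (AD.cdf_ne x) (AD.cdf_ne' x)

lemma AD.g_nonneg (c x : ℝ) : 0 ≤ AD.g c x := by
  unfold AD.g
  have h1 := AD.cdf_pos x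
  have h2 := AD.cdf_lt_one x
  have h3 := (AD.pdf_pos x).le
  have h4 : 0 < stdNormalCDF x * (1 - stdNormalCDF x) := mul_pos h1 (by linarith)
  positivity

lemma AD.H_hasDeriv (c x : ℝ) : HasDerivAt (AD.H c) (AD.g c x) x := by
  have h := AD.cdf_hasDeriv x
  have h0 := AD.cdf_ne x
  have h1 := AD.cdf_ne' x
  have d1 : HasDerivAt (fun y => Real.log (stdNormalCDF y))
      (stdNormalPDF x / stdNormalCDF x) x := h.log h0
  have d2 : HasDerivAt (fun y => Real.log (1 - stdNormalCDF y))
      ((0 - stdNormalPDF x) / (1 - stdNormalCDF x)) x :=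
    ((hasDerivAt_const x (1:ℝ)).sub h).log h1
  have := ((d1.const_mul (c^2)).sub (d2.const_mul ((1-c)^2))).sub h
  refine this.congr_deriv ?_
  unfold AD.g
  field_simp
  ring

lemma AD.H_cont (c : ℝ) : Continuous (AD.H c) :=
  (Differentiable.continuous fun x => (AD.H_hasDeriv c x).differentiableAt)

lemma AD.int_Ico {a b : ℝ} (hab : a ≤ b) (c : ℝ) :
    ∫ x in Set.Ico a b, AD.g c x = AD.H c b - AD.H c a := by
  rw [MeasureTheory.integral_Ico_eq_integral_Ioo, ← MeasureTheory.integral_Ioc_eq_integral_Ioo,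
    ← intervalIntegral.integral_of_le hab]
  exact intervalIntegral.integral_eq_sub_of_hasDerivAt
    (fun x _ => AD.H_hasDeriv c x) ((AD.g_cont c).intervalIntegrable a b)

lemma AD.H0_tendsto : Tendsto (AD.H 0) atBot (nhds 0) := by
  have h1 : Tendsto (fun x => Real.log (1 - stdNormalCDF x)) atBot (nhds 0) := by
    have : Tendsto (fun x => 1 - stdNormalCDF x) atBot (nhds 1) := by
      have := (tendsto_const_nhds (x := (1:ℝ)) (f := (atBot : Filter ℝ))).sub AD.cdf_tendsto_atBot
      simpa using this
    have h := (Real.continuousAt_log one_ne_zero).tendsto.comp this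
    simpa [Function.comp_def] using h
  have h2 := ((tendsto_const_nhds (x := (0:ℝ)) (f := (atBot : Filter ℝ))).sub
    (h1.const_mul ((1-(0:ℝ))^2))).sub AD.cdf_tendsto_atBot
  have : ((0:ℝ) - (1-(0:ℝ))^2 * 0) - 0 = 0 := by ring
  rw [this] at h2
  refine h2.congr fun x => ?_
  unfold AD.H
  ring

lemma AD.H1_tendsto : Tendsto (AD.H 1) atTop (nhds (-1)) := by
  have h1 : Tendsto (fun x => Real.log (stdNormalCDF x)) atTop (nhds 0) := by
    have h := (Real.continuousAt_log one_ne_zero).tendsto.comp AD.cdf_tendsto_atTop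
    simpa [Function.comp_def] using h
  have h2 := ((h1.const_mul ((1:ℝ)^2)).sub
    ((tendsto_const_nhds (x := (0:ℝ)) (f := (atTop : Filter ℝ))))).sub AD.cdf_tendsto_atTop
  have : ((1:ℝ)^2 * 0 - 0) - 1 = -1 := by ring
  rw [this] at h2
  refine h2.congr fun x => ?_
  unfold AD.H
  ring_nf

lemma AD.integrableOn_Iic (a : ℝ) : IntegrableOn (AD.g 0) (Set.Iic a) := by
  refine Integrable.mono' ((AD.pdf_integrable.integrableOn).const_mul
    ((1 - stdNormalCDF a)⁻¹)) ((AD.g_cont 0).aestronglyMeasurable.restrict) ?_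
  rw [ae_restrict_iff' measurableSet_Iic]
  refine Filter.Eventually.of_forall fun x hx => ?_
  have h1 := AD.cdf_pos x
  have h2 := AD.cdf_lt_one x
  have h3 := AD.pdf_pos x
  have h4 : 1 - stdNormalCDF a ≤ 1 - stdNormalCDF x := by
    have := AD.cdf_mono.monotone (hx : x ≤ a)
    linarith
  have h5 : (0:ℝ) < 1 - stdNormalCDF a := by linarith [AD.cdf_lt_one a]
  rw [Real.norm_of_nonneg (AD.g_nonneg 0 x)]
  unfold AD.g
  have key : (0 - stdNormalCDF x)^2 / (stdNormalCDF x * (1 - stdNormalCDF x))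
      ≤ (1 - stdNormalCDF a)⁻¹ := by
    have e : (0 - stdNormalCDF x)^2 / (stdNormalCDF x * (1 - stdNormalCDF x))
        = stdNormalCDF x / (1 - stdNormalCDF x) := by
      have e2 : (0 - stdNormalCDF x)^2 = stdNormalCDF x * stdNormalCDF x := by ring
      rw [e2, mul_div_mul_left _ _ h1.ne']
    rw [e, ← one_div]
    exact div_le_div₀ zero_le_one h2.le h5 h4
  calc (0 - stdNormalCDF x)^2 / (stdNormalCDF x * (1 - stdNormalCDF x)) * stdNormalPDF x
      ≤ (1 - stdNormalCDF a)⁻¹ * stdNormalPDF x := by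
        exact mul_le_mul_of_nonneg_right key h3.le

lemma AD.integrableOn_Ioi (a : ℝ) : IntegrableOn (AD.g 1) (Set.Ioi a) := by
  refine Integrable.mono' ((AD.pdf_integrable.integrableOn).const_mul
    ((stdNormalCDF a)⁻¹)) ((AD.g_cont 1).aestronglyMeasurable.restrict) ?_
  rw [ae_restrict_iff' measurableSet_Ioi]
  refine Filter.Eventually.of_forall fun x hx => ?_
  have h1 := AD.cdf_pos x
  have h2 := AD.cdf_lt_one x
  have h3 := AD.pdf_pos x
  have h4 : stdNormalCDF a ≤ stdNormalCDF x := AD.cdf_mono.monotone (le_of_lt hx)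
  have h5 := AD.cdf_pos a
  rw [Real.norm_of_nonneg (AD.g_nonneg 1 x)]
  unfold AD.g
  have key : (1 - stdNormalCDF x)^2 / (stdNormalCDF x * (1 - stdNormalCDF x))
      ≤ (stdNormalCDF a)⁻¹ := by
    have e : (1 - stdNormalCDF x)^2 / (stdNormalCDF x * (1 - stdNormalCDF x))
        = (1 - stdNormalCDF x) / stdNormalCDF x := by
      have e2 : (1 - stdNormalCDF x)^2 = (1 - stdNormalCDF x) * (1 - stdNormalCDF x) := by ring
      rw [e2, mul_comm (stdNormalCDF x), mul_div_mul_left _ _ (by linarith : (1:ℝ) - stdNormalCDF x ≠ 0)]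
    rw [e, ← one_div]
    exact div_le_div₀ zero_le_one (by linarith) h5 h4
  exact mul_le_mul_of_nonneg_right key h3.le

lemma AD.int_Iio (a : ℝ) : ∫ x in Set.Iio a, AD.g 0 x = AD.H 0 a := by
  rw [← MeasureTheory.integral_Iic_eq_integral_Iio]
  rw [integral_Iic_of_hasDerivAt_of_tendsto' (fun x _ => AD.H_hasDeriv 0 x)
    (AD.integrableOn_Iic a) AD.H0_tendsto]
  ring

lemma AD.int_Ici (a : ℝ) : ∫ x in Set.Ici a, AD.g 1 x = -1 - AD.H 1 a := by
  rw [MeasureTheory.integral_Ici_eq_integral_Ioi]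
  rw [integral_Ioi_of_hasDerivAt_of_tendsto' (fun x _ => AD.H_hasDeriv 1 x)
    (AD.integrableOn_Ioi a) AD.H1_tendsto]

lemma AD.abel (a P : ℕ → ℝ) (m : ℕ) :
    a 0 * P 0 + (∑ k ∈ Finset.range m, a (k+1) * (P (k+1) - P k)) - a (m+1) * P m
      = ∑ k ∈ Finset.range (m+1), (a k - a (k+1)) * P k := by
  induction m with
  | zero => simp; ring
  | succ m ih =>
    rw [Finset.sum_range_succ, Finset.sum_range_succ
      (f := fun k => (a k - a (k+1)) * P k), ← ih]
    ring

lemma AD.emp_eq {n : ℕ} (X : Fin n → ℝ) (x : ℝ) (j : Fin n) (h : ∀ i, X i ≤ x ↔ i < j) :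
    empiricalCDF n X x = ((j : ℕ) : ℝ) / (n : ℝ) := by
  unfold empiricalCDF
  have e : (Finset.univ.filter fun i => X i ≤ x) = Finset.Iio j := by
    ext i; simp [h i]
  rw [e, Fin.card_Iio]

lemma AD.emp_top {n : ℕ} (hn : 0 < n) (X : Fin n → ℝ) (x : ℝ) (h : ∀ i, X i ≤ x) :
    empiricalCDF n X x = 1 := by
  unfold empiricalCDF
  have e : (Finset.univ.filter fun i => X i ≤ x) = Finset.univ := by
    ext i; simp [h i]
  rw [e, Finset.card_univ, Fintype.card_fin]
  exact div_self (Nat.cast_ne_zero.2 hn.ne')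

theorem anderson_darling_integral_eq_computable (n : ℕ) (hn : 0 < n) (X : Fin n → ℝ)
    (hX : StrictMono X)
    (hΦ : ∀ i, 0 < stdNormalCDF (X i) ∧ stdNormalCDF (X i) < 1) :
    (n : ℝ) * ∫ x : ℝ, (empiricalCDF n X x - stdNormalCDF x) ^ 2 /
        (stdNormalCDF x * (1 - stdNormalCDF x)) * stdNormalPDF x
      = -(n : ℝ) - (1 / (n : ℝ)) * ∑ i : Fin n, (2 * (i : ℝ) + 1) *
          (Real.log (stdNormalCDF (X i)) + Real.log (1 - stdNormalCDF (X i.rev))) := by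
  have hn' : (n : ℝ) ≠ 0 := Nat.cast_ne_zero.2 hn.ne'
  set f : ℝ → ℝ := fun x => (empiricalCDF n X x - stdNormalCDF x) ^ 2 /
      (stdNormalCDF x * (1 - stdNormalCDF x)) * stdNormalPDF x with hfdef
  set b : ℕ → ℝ := fun k => X ⟨min k (n - 1), by omega⟩ with hbdef
  have hb : ∀ (k : ℕ) (hk : k < n), b k = X ⟨k, hk⟩ := by
    intro k hk
    simp only [hbdef]
    exact congrArg X (Fin.ext (by simp only [Fin.val_mk]; omega))
  -- empirical CDF values on the pieces
  have hemp0 : ∀ x ∈ Set.Iio (b 0), empiricalCDF n X x = 0 := by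
    intro x hx
    have h0 := AD.emp_eq X x ⟨0, hn⟩ ?_
    · rw [h0]; simp
    · intro i
      rw [hb 0 hn] at hx
      constructor
      · intro hXi
        have hle : (⟨0, hn⟩ : Fin n) ≤ i := Fin.le_def.2 (Nat.zero_le _)
        exact absurd (le_trans (hX.monotone hle) hXi) (not_le.2 hx)
      · intro hlt
        exact absurd hlt (by simp [Fin.lt_def])
  have hempk : ∀ (k : ℕ) (hk : k + 1 < n), ∀ x ∈ Set.Ico (b k) (b (k + 1)),
      empiricalCDF n X x = ((k + 1 : ℕ) : ℝ) / (n : ℝ) := by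
    intro k hk x hx
    rw [hb k (by omega), hb (k + 1) hk] at hx
    have h0 := AD.emp_eq X x ⟨k + 1, hk⟩ ?_
    · rw [h0]
    · intro i
      constructor
      · intro hXi
        exact hX.lt_iff_lt.1 (lt_of_le_of_lt hXi hx.2)
      · intro hi
        have hi' : i ≤ (⟨k, by omega⟩ : Fin n) := by
          rw [Fin.le_def]
          rw [Fin.lt_def] at hi
          simp only [Fin.val_mk] at hi ⊢
          omega
        exact le_trans (hX.monotone hi') hx.1
  have hemptop : ∀ x ∈ Set.Ici (b (n - 1)), empiricalCDF n X x = 1 := by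
    intro x hx
    rw [hb (n - 1) (by omega)] at hx
    refine AD.emp_top hn X x fun i => ?_
    refine le_trans (hX.monotone ?_) hx
    rw [Fin.le_def]
    simp only [Fin.val_mk]
    omega
  -- f agrees with g on pieces
  have hf0 : Set.EqOn f (AD.g 0) (Set.Iio (b 0)) := by
    intro x hx
    simp only [hfdef, AD.g, hemp0 x hx]
  have hfk : ∀ (k : ℕ) (hk : k + 1 < n),
      Set.EqOn f (AD.g (((k + 1 : ℕ) : ℝ) / (n : ℝ))) (Set.Ico (b k) (b (k + 1))) := by
    intro k hk x hx
    simp only [hfdef, AD.g, hempk k hk x hx]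
  have hftop : Set.EqOn f (AD.g 1) (Set.Ici (b (n - 1))) := by
    intro x hx
    simp only [hfdef, AD.g, hemptop x hx]
  -- integrability on pieces
  have hint0 : MeasureTheory.IntegrableOn f (Set.Iio (b 0)) :=
    (((AD.integrableOn_Iic (b 0)).mono_set Set.Iio_subset_Iic_self)).congr_fun
      hf0.symm measurableSet_Iio
  have hintk : ∀ (k : ℕ) (hk : k + 1 < n),
      MeasureTheory.IntegrableOn f (Set.Ico (b k) (b (k + 1))) := fun k hk =>
    (((AD.g_cont _).integrableOn_Icc).mono_set Set.Ico_subset_Icc_self).congr_fun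
      (hfk k hk).symm measurableSet_Ico
  have hinttop : MeasureTheory.IntegrableOn f (Set.Ici (b (n - 1))) :=
    ((integrableOn_Ici_iff_integrableOn_Ioi (f := AD.g 1)).2 (AD.integrableOn_Ioi (b (n - 1)))).congr_fun
      hftop.symm measurableSet_Ici
  -- main induction
  have main : ∀ m, m < n → MeasureTheory.IntegrableOn f (Set.Iio (b m)) ∧
      ∫ x in Set.Iio (b m), f x = AD.H 0 (b 0) +
        ∑ k ∈ Finset.range m,
          (AD.H (((k + 1 : ℕ) : ℝ) / (n : ℝ)) (b (k + 1)) -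
            AD.H (((k + 1 : ℕ) : ℝ) / (n : ℝ)) (b k)) := by
    intro m
    induction m with
    | zero =>
      intro _
      refine ⟨hint0, ?_⟩
      rw [MeasureTheory.setIntegral_congr_fun measurableSet_Iio hf0, AD.int_Iio]
      simp
    | succ m ih =>
      intro hm
      obtain ⟨ih1, ih2⟩ := ih (by omega)
      have hmono : b m ≤ b (m + 1) := by
        rw [hb m (by omega), hb (m + 1) hm]
        exact hX.monotone (by rw [Fin.le_def]; simp only [Fin.val_mk]; omega)
      have hunion : Set.Iio (b m) ∪ Set.Ico (b m) (b (m + 1)) = Set.Iio (b (m + 1)) :=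
        Set.Iio_union_Ico_eq_Iio hmono
      have hdisj : Disjoint (Set.Iio (b m)) (Set.Ico (b m) (b (m + 1))) := by
        rw [Set.disjoint_left]
        rintro x hx ⟨h1, _⟩
        exact absurd h1 (not_le.2 hx)
      refine ⟨by rw [← hunion]; exact ih1.union (hintk m hm), ?_⟩
      rw [← hunion, MeasureTheory.setIntegral_union hdisj measurableSet_Ico ih1 (hintk m hm),
        ih2, Finset.sum_range_succ]
      have hpc : ∫ x in Set.Ico (b m) (b (m + 1)), f x
          = AD.H (((m + 1 : ℕ) : ℝ) / (n : ℝ)) (b (m + 1)) -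
            AD.H (((m + 1 : ℕ) : ℝ) / (n : ℝ)) (b m) := by
        rw [MeasureTheory.setIntegral_congr_fun measurableSet_Ico (hfk m hm)]
        exact AD.int_Ico hmono _
      rw [hpc]
      ring
  -- assemble the full integral
  have hIio := main (n - 1) (by omega)
  have htot := intervalIntegral.integral_Iio_add_Ici (μ := MeasureTheory.volume)
    (b := b (n - 1)) (f := f) hIio.1 hinttop
  have htopval : ∫ x in Set.Ici (b (n - 1)), f x = -1 - AD.H 1 (b (n - 1)) := by
    rw [MeasureTheory.setIntegral_congr_fun measurableSet_Ici hftop]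
    exact AD.int_Ici _
  rw [← htot, hIio.2, htopval]
  -- now pure algebra
  have key := AD.abel (fun j => (((j : ℕ) : ℝ) / (n : ℝ)) ^ 2)
    (fun j => Real.log (stdNormalCDF (b j))) (n - 1)
  have key2 := AD.abel (fun j => (1 - ((j : ℕ) : ℝ) / (n : ℝ)) ^ 2)
    (fun j => Real.log (1 - stdNormalCDF (b j))) (n - 1)
  have key3 := Finset.sum_range_sub (fun j => stdNormalCDF (b j)) (n - 1)
  rw [show n - 1 + 1 = n from by omega] at key key2
  rw [div_self hn'] at key key2
  simp only [Nat.cast_zero, zero_div] at key key2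
  -- rewrite RHS sum
  have hsum : ∑ i : Fin n, (2 * (i : ℝ) + 1) *
      (Real.log (stdNormalCDF (X i)) + Real.log (1 - stdNormalCDF (X i.rev)))
      = ∑ k ∈ Finset.range n, (2 * (k : ℝ) + 1) * (Real.log (stdNormalCDF (b k))
        + Real.log (1 - stdNormalCDF (b (n - 1 - k)))) := by
    rw [← Fin.sum_univ_eq_sum_range (fun k => (2 * (k : ℝ) + 1) *
      (Real.log (stdNormalCDF (b k)) + Real.log (1 - stdNormalCDF (b (n - 1 - k))))) n]
    refine Finset.sum_congr rfl fun i _ => ?_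
    have e1 : b (i : ℕ) = X i := by
      rw [hb (i : ℕ) i.isLt]
    have e2 : b (n - 1 - (i : ℕ)) = X i.rev := by
      rw [hb (n - 1 - (i : ℕ)) (by omega)]
      refine congrArg X (Fin.ext ?_)
      simp only [Fin.val_mk, Fin.val_rev]
      omega
    rw [e1, e2]
  rw [hsum]
  have hsplit2 : ∑ k ∈ Finset.range n, (2 * (k : ℝ) + 1) * (Real.log (stdNormalCDF (b k))
        + Real.log (1 - stdNormalCDF (b (n - 1 - k))))
      = ∑ k ∈ Finset.range n, (2 * (k : ℝ) + 1) * Real.log (stdNormalCDF (b k))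
        + ∑ k ∈ Finset.range n, (2 * (k : ℝ) + 1) * Real.log (1 - stdNormalCDF (b (n - 1 - k))) := by
    rw [← Finset.sum_add_distrib]
    exact Finset.sum_congr rfl fun k _ => by ring
  have hrefl : ∑ k ∈ Finset.range n, (2 * (k : ℝ) + 1) * Real.log (1 - stdNormalCDF (b (n - 1 - k)))
      = ∑ k ∈ Finset.range n, (2 * ((n - 1 - k : ℕ) : ℝ) + 1) * Real.log (1 - stdNormalCDF (b k)) := by
    rw [← Finset.sum_range_reflect (fun j => (2 * (j : ℝ) + 1) *
      Real.log (1 - stdNormalCDF (b (n - 1 - j)))) n]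
    refine Finset.sum_congr rfl fun k hk => ?_
    have hk' : k < n := Finset.mem_range.1 hk
    rw [show n - 1 - (n - 1 - k) = k from by omega]
  rw [hsplit2, hrefl]
  -- decompose the middle sum
  have hdeco : ∑ k ∈ Finset.range (n - 1),
        (AD.H (((k + 1 : ℕ) : ℝ) / (n : ℝ)) (b (k + 1)) -
          AD.H (((k + 1 : ℕ) : ℝ) / (n : ℝ)) (b k))
      = (∑ k ∈ Finset.range (n - 1), (((k + 1 : ℕ) : ℝ) / (n : ℝ)) ^ 2 *
            (Real.log (stdNormalCDF (b (k + 1))) - Real.log (stdNormalCDF (b k))))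
        - (∑ k ∈ Finset.range (n - 1), (1 - ((k + 1 : ℕ) : ℝ) / (n : ℝ)) ^ 2 *
            (Real.log (1 - stdNormalCDF (b (k + 1))) - Real.log (1 - stdNormalCDF (b k))))
        - (∑ k ∈ Finset.range (n - 1), (stdNormalCDF (b (k + 1)) - stdNormalCDF (b k))) := by
    rw [← Finset.sum_sub_distrib, ← Finset.sum_sub_distrib]
    refine Finset.sum_congr rfl fun k _ => ?_
    simp only [AD.H]
    ring
  rw [hdeco]
  -- pointwise coefficient identities
  have hLK : (n : ℝ) * ∑ k ∈ Finset.range n,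
        ((((k : ℕ) : ℝ) / (n : ℝ)) ^ 2 - (((k + 1 : ℕ) : ℝ) / (n : ℝ)) ^ 2) *
          Real.log (stdNormalCDF (b k))
      = -(1 / (n : ℝ)) * ∑ k ∈ Finset.range n, (2 * (k : ℝ) + 1) *
          Real.log (stdNormalCDF (b k)) := by
    rw [Finset.mul_sum, Finset.mul_sum]
    refine Finset.sum_congr rfl fun k _ => ?_
    push_cast
    field_simp
    ring
  have hMK : (n : ℝ) * ∑ k ∈ Finset.range n,
        ((1 - ((k : ℕ) : ℝ) / (n : ℝ)) ^ 2 - (1 - ((k + 1 : ℕ) : ℝ) / (n : ℝ)) ^ 2) *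
          Real.log (1 - stdNormalCDF (b k))
      = (1 / (n : ℝ)) * ∑ k ∈ Finset.range n, (2 * ((n - 1 - k : ℕ) : ℝ) + 1) *
          Real.log (1 - stdNormalCDF (b k)) := by
    rw [Finset.mul_sum, Finset.mul_sum]
    refine Finset.sum_congr rfl fun k hk => ?_
    have hk' : k < n := Finset.mem_range.1 hk
    have hc : ((n - 1 - k : ℕ) : ℝ) = (n : ℝ) - 1 - (k : ℝ) := by
      rw [Nat.cast_sub (by omega : k ≤ n - 1), Nat.cast_sub (by omega : 1 ≤ n)]
      norm_num
    rw [hc]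
    push_cast
    field_simp
    ring
  simp only [AD.H]
  linear_combination (n : ℝ) * key - (n : ℝ) * key2 - (n : ℝ) * key3 + hLK - hMK
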